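/- For every δ > 0 there exists a constant C_{δ,L} > 0 such that for every u ∈ X one has ‖u‖_Y² ≤ (1+δ)·ε_L²·‖u‖_X² + C_{δ,L}·max_{1≤j≤k} |l_j(u)|²; equivalently, ‖u‖_X² ≥ (1+δ)^{-1}·ε_L^{-2}·‖u‖_Y² − C'_{δ,L}·max_{1≤j≤k} |l_j(u)|² for a suitable constant C'_{δ,L} > 0. -/

import Mathlib

open Filter

lemma exists_dual_family {X : Type*} [NormedAddCommGroup X] [NormedSpace ℝ X]
    {k : ℕ} (l : Fin k → (X →L[ℝ] ℝ)) (hl : LinearIndependent ℝ l) :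
    ∃ x : Fin k → X, ∀ i j, l i (x j) = if i = j then 1 else 0 := by
  set Φ : X →ₗ[ℝ] (Fin k → ℝ) := LinearMap.pi (fun j => (l j : X →ₗ[ℝ] ℝ)) with hΦ
  have hsurj : Function.Surjective Φ := by
    by_contra hns
    rw [← LinearMap.range_eq_top] at hns
    obtain ⟨φ, φne, hφ⟩ :=
      Submodule.exists_dual_map_eq_bot_of_lt_top (lt_top_iff_ne_top.2 hns) inferInstance
    have hker : ∀ u : X, φ (Φ u) = 0 := by
      intro u
      have hmem : φ (Φ u) ∈ Submodule.map φ (LinearMap.range Φ) := ⟨Φ u, ⟨u, rfl⟩, rfl⟩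
      rw [hφ] at hmem
      exact hmem
    have hgl : (∑ i, φ ((Pi.single i 1 : Fin k → ℝ)) • l i) = 0 := by
      ext u
      have h1 : Φ u = ∑ i, (l i u) • ((Pi.single i 1 : Fin k → ℝ) : Fin k → ℝ) := by
        ext j
        simp [hΦ, LinearMap.pi_apply, Finset.sum_apply, Pi.single_apply]
      have h2 := hker u
      rw [h1, map_sum] at h2
      simp only [map_smul, smul_eq_mul] at h2
      simp only [ContinuousLinearMap.coe_sum', Finset.sum_apply,
        ContinuousLinearMap.coe_smul', Pi.smul_apply, smul_eq_mul,
        ContinuousLinearMap.zero_apply]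
      simpa [mul_comm] using h2
    have hz := Fintype.linearIndependent_iff.mp hl (fun i => φ ((Pi.single i 1 : Fin k → ℝ))) hgl
    apply φne
    apply (Pi.basisFun ℝ (Fin k)).ext
    intro i
    simpa [Pi.basisFun_apply] using hz i
  choose x hx using fun j => hsurj ((Pi.single j 1 : Fin k → ℝ))
  refine ⟨x, fun i j => ?_⟩
  have h := congrFun (hx j) i
  simpa [hΦ, LinearMap.pi_apply, Pi.single_apply] using h

/-- In the setting of the completeness defect `εL` of a family of
linearly independent continuous functionals `l 1, …, l k` on `X` with respect to the
pair `(X, Y)`: for every `δ > 0` there is a constant `C_{δ,L} > 0` such that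
`‖u‖_Y² ≤ (1+δ) εL² ‖u‖_X² + C_{δ,L} max_j |l j u|²` for all `u`; equivalently,
`‖u‖_X² ≥ (1+δ)⁻¹ εL⁻² ‖u‖_Y² − C'_{δ,L} max_j |l j u|²` for a suitable
constant `C'_{δ,L} > 0`. -/
theorem statement1
    {X Y : Type*} [NormedAddCommGroup X] [NormedSpace ℝ X]
    [NormedAddCommGroup Y] [NormedSpace ℝ Y]
    (e : X →L[ℝ] Y) (he : Function.Injective e)
    {k : ℕ} (hk : 0 < k) (l : Fin k → (X →L[ℝ] ℝ))
    (hl : LinearIndependent ℝ l)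
    (εL : ℝ)
    (hεL : εL = sSup {r : ℝ | ∃ w : X, (∀ j, l j w = 0) ∧ ‖w‖ ≤ 1 ∧ r = ‖e w‖}) :
    ∀ δ : ℝ, 0 < δ →
      (∃ C : ℝ, 0 < C ∧ ∀ u : X,
          ‖e u‖ ^ 2 ≤ (1 + δ) * εL ^ 2 * ‖u‖ ^ 2 + C * (⨆ j, |l j u|) ^ 2) ∧
      (∃ C' : ℝ, 0 < C' ∧ ∀ u : X,
          ‖u‖ ^ 2 ≥ (1 + δ)⁻¹ * (εL ^ 2)⁻¹ * ‖e u‖ ^ 2 - C' * (⨆ j, |l j u|) ^ 2) := by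
  intro δ hδ
  haveI : Nonempty (Fin k) := ⟨⟨0, hk⟩⟩
  set S : Set ℝ := {r : ℝ | ∃ w : X, (∀ j, l j w = 0) ∧ ‖w‖ ≤ 1 ∧ r = ‖e w‖} with hS
  have hS0 : (0 : ℝ) ∈ S := ⟨0, fun j => map_zero _, by simp, by simp⟩
  have hbdd : BddAbove S := by
    refine ⟨‖e‖, fun r hr => ?_⟩
    obtain ⟨w, -, hw1, rfl⟩ := hr
    calc ‖e w‖ ≤ ‖e‖ * ‖w‖ := e.le_opNorm w
    _ ≤ ‖e‖ * 1 := by gcongr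
    _ = ‖e‖ := mul_one _
  have hεL0 : 0 ≤ εL := hεL ▸ le_csSup hbdd hS0
  -- key estimate on the kernel
  have key : ∀ w : X, (∀ j, l j w = 0) → ‖e w‖ ≤ εL * ‖w‖ := by
    intro w hw
    rcases eq_or_ne w 0 with rfl | hw0
    · simp
    · have hn : 0 < ‖w‖ := norm_pos_iff.mpr hw0
      have hmem : ‖e (‖w‖⁻¹ • w)‖ ∈ S := by
        refine ⟨‖w‖⁻¹ • w, fun j => by simp [hw j], ?_, rfl⟩
        simp [norm_smul, abs_of_nonneg (inv_nonneg.mpr hn.le), inv_mul_cancel₀ hn.ne']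
      have hle : ‖e (‖w‖⁻¹ • w)‖ ≤ εL := hεL ▸ le_csSup hbdd hmem
      have : ‖w‖⁻¹ * ‖e w‖ ≤ εL := by
        simpa [map_smul, norm_smul, abs_of_nonneg (inv_nonneg.mpr hn.le)] using hle
      calc ‖e w‖ = ‖w‖ * (‖w‖⁻¹ * ‖e w‖) := by field_simp
      _ ≤ ‖w‖ * εL := by gcongr
      _ = εL * ‖w‖ := mul_comm _ _
  obtain ⟨x, hx⟩ := exists_dual_family l hl
  set M : ℝ := ∑ j, ‖x j‖ with hM
  have hM0 : 0 ≤ M := Finset.sum_nonneg fun j _ => norm_nonneg _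
  set K : ℝ := (εL + ‖e‖) * M with hK
  have hK0 : 0 ≤ K := mul_nonneg (add_nonneg hεL0 e.opNorm_nonneg) hM0
  -- the main pointwise estimate
  have main : ∀ u : X, ‖e u‖ ≤ εL * ‖u‖ + K * (⨆ j, |l j u|) := by
    intro u
    set m : ℝ := ⨆ j, |l j u| with hm
    have hbr : BddAbove (Set.range fun j => |l j u|) := (Set.finite_range _).bddAbove
    have hmle : ∀ j, |l j u| ≤ m := fun j => le_ciSup hbr j
    have hm0 : 0 ≤ m := le_trans (abs_nonneg _) (hmle ⟨0, hk⟩)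
    set v : X := ∑ j, l j u • x j with hv
    have hlv : ∀ j, l j v = l j u := by
      intro j
      simp only [hv, map_sum, map_smul, smul_eq_mul]
      rw [Finset.sum_eq_single j]
      · simp [hx j j]
      · intro i _ hij
        simp [hx j i, Ne.symm hij]
      · simp
    have hlw : ∀ j, l j (u - v) = 0 := by
      intro j; simp [hlv j]
    have hvle : ‖v‖ ≤ M * m := by
      calc ‖v‖ ≤ ∑ j, ‖l j u • x j‖ := norm_sum_le _ _
      _ = ∑ j, |l j u| * ‖x j‖ := by simp [norm_smul, Real.norm_eq_abs]
      _ ≤ ∑ j, m * ‖x j‖ := by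
          refine Finset.sum_le_sum fun j _ => ?_
          exact mul_le_mul_of_nonneg_right (hmle j) (norm_nonneg _)
      _ = M * m := by rw [← Finset.mul_sum, mul_comm]
    calc ‖e u‖ = ‖e (u - v) + e v‖ := by rw [← map_add, sub_add_cancel]
    _ ≤ ‖e (u - v)‖ + ‖e v‖ := norm_add_le _ _
    _ ≤ εL * ‖u - v‖ + ‖e‖ * ‖v‖ := add_le_add (key _ hlw) (e.le_opNorm v)
    _ ≤ εL * (‖u‖ + ‖v‖) + ‖e‖ * ‖v‖ := by
        gcongr
        exact (norm_sub_le _ _)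
    _ = εL * ‖u‖ + (εL + ‖e‖) * ‖v‖ := by ring
    _ ≤ εL * ‖u‖ + (εL + ‖e‖) * (M * m) := by
        gcongr
    _ = εL * ‖u‖ + K * m := by rw [hK]; ring
  -- squaring
  have hC : (0 : ℝ) < (1 + δ⁻¹) * K ^ 2 + 1 := by positivity
  have first : ∀ u : X,
      ‖e u‖ ^ 2 ≤ (1 + δ) * εL ^ 2 * ‖u‖ ^ 2 + ((1 + δ⁻¹) * K ^ 2 + 1) * (⨆ j, |l j u|) ^ 2 := by
    intro u
    set m : ℝ := ⨆ j, |l j u| with hm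
    have hbr : BddAbove (Set.range fun j => |l j u|) := (Set.finite_range _).bddAbove
    have hm0 : 0 ≤ m := le_trans (abs_nonneg _) (le_ciSup hbr ⟨0, hk⟩)
    have h := main u
    have hA : 0 ≤ εL * ‖u‖ := mul_nonneg hεL0 (norm_nonneg _)
    have hB : 0 ≤ K * m := mul_nonneg hK0 hm0
    have hsq : ‖e u‖ ^ 2 ≤ (εL * ‖u‖ + K * m) ^ 2 := by
      have := norm_nonneg (e u)
      nlinarith
    have hyoung : 2 * (εL * ‖u‖) * (K * m) ≤ δ * (εL * ‖u‖) ^ 2 + δ⁻¹ * (K * m) ^ 2 := by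
      have h2 : 2 * (δ * (εL * ‖u‖)) * (K * m) ≤ (δ * (εL * ‖u‖)) ^ 2 + (K * m) ^ 2 :=
        two_mul_le_add_sq _ _
      have hδ' : 0 < δ⁻¹ := inv_pos.mpr hδ
      have h3 := mul_le_mul_of_nonneg_left h2 hδ'.le
      calc 2 * (εL * ‖u‖) * (K * m)
          = δ⁻¹ * (2 * (δ * (εL * ‖u‖)) * (K * m)) := by
            field_simp
      _ ≤ δ⁻¹ * ((δ * (εL * ‖u‖)) ^ 2 + (K * m) ^ 2) := h3
      _ = δ * (εL * ‖u‖) ^ 2 + δ⁻¹ * (K * m) ^ 2 := by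
            field_simp
    nlinarith [sq_nonneg m]
  refine ⟨⟨(1 + δ⁻¹) * K ^ 2 + 1, hC, first⟩, ?_⟩
  refine ⟨(1 + δ)⁻¹ * (εL ^ 2)⁻¹ * ((1 + δ⁻¹) * K ^ 2 + 1) + 1, by positivity, ?_⟩
  intro u
  set m : ℝ := ⨆ j, |l j u| with hm
  rcases eq_or_ne εL 0 with h0 | h0
  · have : (εL ^ 2)⁻¹ = 0 := by simp [h0]
    rw [this]
    have hbr : BddAbove (Set.range fun j => |l j u|) := (Set.finite_range _).bddAbove
    have hm0 : 0 ≤ m := le_trans (abs_nonneg _) (le_ciSup hbr ⟨0, hk⟩)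
    nlinarith [sq_nonneg ‖u‖, sq_nonneg m, sq_nonneg K, inv_pos.mpr hδ]
  · have hε2 : 0 < εL ^ 2 := by positivity
    have h1 := first u
    have hPpos : 0 < (1 + δ)⁻¹ * (εL ^ 2)⁻¹ := by positivity
    have h2 := mul_le_mul_of_nonneg_left h1 hPpos.le
    have h3 : (1 + δ)⁻¹ * (εL ^ 2)⁻¹ *
        ((1 + δ) * εL ^ 2 * ‖u‖ ^ 2 + ((1 + δ⁻¹) * K ^ 2 + 1) * m ^ 2)
        = ‖u‖ ^ 2 + (1 + δ)⁻¹ * (εL ^ 2)⁻¹ * ((1 + δ⁻¹) * K ^ 2 + 1) * m ^ 2 := by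
      field_simp
    rw [h3] at h2
    linarith [h2, sq_nonneg m]
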